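/- Let q = p^k with p prime and k ≥ 1, let s ≥ 1 be an integer, and let e_1, …, e_s be distinct non-negative integers. Then the number S_{e_1,…,e_s}(q) of dynamical-equivalence classes among the maps F_q → F_q of the form x ↦ a_1 x^{e_1} + … + a_s x^{e_s} with a_1, …, a_s ∈ F_q^* satisfies, as an inequality of real numbers, S_{e_1,…,e_s}(q) ≤ (p^k − 1)^s / k + 2 (p^{k/2} − 1)^s / k + (p^{k/3} − 1)^s, where p^{k/2} and p^{k/3} denote real powers. -/

import Mathlib

/-- Two self-maps `f g : α → α` are dynamically equivalent if there is a bijection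
`σ : α → α` with `σ⁻¹ ∘ g ∘ σ = f`. -/
def DynEquiv {α : Type*} (f g : α → α) : Prop :=
  ∃ σ : Equiv.Perm α, ∀ x, σ.symm (g (σ x)) = f x

/-- The number of dynamical-equivalence classes represented by the elements of a set `S`
of self-maps. -/
noncomputable def numDynClasses {α : Type*} (S : Set (α → α)) : ℕ :=
  Nat.card (Quot (fun f g : S => DynEquiv f.1 g.1))

open Polynomial in
lemma aux_card_le_of_forall_pow {F : Type*} [Field F] [Fintype F] (n : ℕ) (hn : 2 ≤ n)
    (h : ∀ x : F, x ^ n = x) : Fintype.card F ≤ n := by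
  classical
  set P : Polynomial F := X ^ n - X with hPdef
  have hdeg : P.degree = n := by
    rw [hPdef, degree_sub_eq_left_of_degree_lt, degree_X_pow]
    rw [degree_X_pow, degree_X]
    exact_mod_cast (by omega : 1 < n)
  have hP0 : P ≠ 0 := fun h => by
    rw [h, degree_zero] at hdeg; exact (by simp : (⊥ : WithBot ℕ) ≠ (n : WithBot ℕ)) hdeg
  have hsub : Finset.univ ⊆ P.roots.toFinset := by
    intro x _
    simp only [Multiset.mem_toFinset, mem_roots hP0, IsRoot, hPdef]
    simp [sub_eq_zero, h x]; exact fun h' => hP0 (by rw [hPdef, h', sub_self])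
  calc Fintype.card F = Finset.univ.card := (Finset.card_univ (α := F)).symm
    _ ≤ P.roots.toFinset.card := Finset.card_le_card hsub
    _ ≤ Multiset.card P.roots := Multiset.toFinset_card_le _
    _ ≤ P.natDegree := card_roots' P
    _ = n := natDegree_eq_of_degree_eq_some hdeg

lemma aux_bezout (j k : ℕ) (hj : 1 ≤ j) (hk : 1 ≤ k) :
    ∃ c m : ℕ, j * c = Nat.gcd j k + k * m := by
  have hgcd := Nat.gcd_eq_gcd_ab j k
  set A := Nat.gcdA j k with hA
  set B := Nat.gcdB j k with hB
  set N : ℤ := (A.natAbs : ℤ) + (B.natAbs : ℤ) + 1 with hN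
  have hA1 : A ≤ (A.natAbs : ℤ) := Int.le_natAbs
  have hA2 : -(A.natAbs : ℤ) ≤ A := neg_abs_le A |>.trans_eq' (by rw [Int.abs_eq_natAbs])
  have hB1 : B ≤ (B.natAbs : ℤ) := Int.le_natAbs
  have hkz : (1 : ℤ) ≤ (k : ℤ) := by exact_mod_cast hk
  have hjz : (1 : ℤ) ≤ (j : ℤ) := by exact_mod_cast hj
  have hNpos : (0 : ℤ) ≤ N := by positivity
  have hc : (0 : ℤ) ≤ A + k * N := by nlinarith [Int.natCast_nonneg A.natAbs, Int.natCast_nonneg B.natAbs]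
  have hm : (0 : ℤ) ≤ j * N - B := by nlinarith [Int.natCast_nonneg A.natAbs, Int.natCast_nonneg B.natAbs]
  refine ⟨(A + k * N).toNat, (j * N - B).toNat, ?_⟩
  have : (j : ℤ) * (A + k * N) = (Nat.gcd j k : ℤ) + k * (j * N - B) := by
    rw [hgcd]; push_cast; ring
  have h2 : ((j * (A + k * N).toNat : ℕ) : ℤ) = ((Nat.gcd j k + k * (j * N - B).toNat : ℕ) : ℤ) := by
    push_cast [Int.toNat_of_nonneg hc, Int.toNat_of_nonneg hm]
    linarith [this]
  exact_mod_cast h2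

lemma aux_pow_pow_fix {F : Type*} [Monoid F] (x : F) (q : ℕ) (h : x ^ q = x) :
    ∀ c, x ^ q ^ c = x := by
  intro c
  induction c with
  | zero => simp
  | succ c ih => rw [pow_succ, pow_mul, ih, h]

lemma aux_gcd_fix {F : Type*} [Monoid F] (p j k : ℕ) (hj : 1 ≤ j) (hk : 1 ≤ k) (x : F)
    (hx : x ^ p ^ j = x) (hall : x ^ p ^ k = x) : x ^ p ^ Nat.gcd j k = x := by
  obtain ⟨c, m, hcm⟩ := aux_bezout j k hj hk
  have h1 : x ^ p ^ (j * c) = x := by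
    rw [pow_mul]
    exact aux_pow_pow_fix x (p ^ j) hx c
  have h2 : x ^ p ^ (k * m) = x := by
    rw [pow_mul]
    exact aux_pow_pow_fix x (p ^ k) hall m
  calc x ^ p ^ Nat.gcd j k = (x ^ p ^ (k * m)) ^ p ^ Nat.gcd j k := by rw [h2]
    _ = x ^ (p ^ (k * m) * p ^ Nat.gcd j k) := (pow_mul x _ _).symm
    _ = x ^ p ^ (Nat.gcd j k + k * m) := by rw [pow_add, mul_comm]
    _ = x ^ p ^ (j * c) := by rw [← hcm]
    _ = x := h1


lemma aux_dynEquiv_symm {α : Type*} {f g : α → α} (h : DynEquiv f g) : DynEquiv g f := by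
  obtain ⟨σ, hσ⟩ := h
  refine ⟨σ.symm, fun x => ?_⟩
  have h1 := hσ (σ.symm x)
  rw [Equiv.apply_symm_apply] at h1
  simp [← h1]

noncomputable def auxPermHom (F : Type*) [CommRing F] (s : ℕ) :
    RingAut F →* Equiv.Perm (Fin s → Fˣ) where
  toFun σ := Equiv.piCongrRight fun _ => (Units.mapEquiv σ.toMulEquiv).toEquiv
  map_one' := by refine Equiv.ext fun a => funext fun i => ?_; exact Units.ext rfl
  map_mul' σ τ := by refine Equiv.ext fun a => funext fun i => ?_; exact Units.ext rfl

lemma auxPermHom_apply {F : Type*} [CommRing F] {s : ℕ} (σ : RingAut F) (a : Fin s → Fˣ)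
    (i : Fin s) : ((auxPermHom F s σ a i : Fˣ) : F) = σ ((a i : F)) := rfl

lemma aux_dynEquiv_ringAut {F : Type*} [CommRing F] {s : ℕ} (e : Fin s → ℕ)
    (σ : RingAut F) (a : Fin s → Fˣ) :
    DynEquiv (fun x : F => ∑ i, (a i : F) * x ^ e i)
      (fun x : F => ∑ i, ((auxPermHom F s σ a i : Fˣ) : F) * x ^ e i) := by
  refine ⟨σ.toEquiv, fun x => ?_⟩
  show σ.toEquiv.symm (∑ i, ((auxPermHom F s σ a i : Fˣ) : F) * (σ.toEquiv x) ^ e i) = _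
  have h1 : (∑ i, ((auxPermHom F s σ a i : Fˣ) : F) * (σ.toEquiv x) ^ e i)
      = σ (∑ i, (a i : F) * x ^ e i) := by
    rw [map_sum]
    refine Finset.sum_congr rfl fun i _ => ?_
    rw [auxPermHom_apply, map_mul, map_pow]
    rfl
  rw [h1]
  exact σ.toEquiv.symm_apply_apply _

open Polynomial in
lemma aux_units_fix_card_le {F : Type*} [Field F] [Fintype F] (n : ℕ) (hn : 2 ≤ n) :
    Nat.card {u : Fˣ // (u : F) ^ n = (u : F)} ≤ n - 1 := by
  classical
  set P : Polynomial F := X ^ n - X with hPdef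
  have hdeg : P.degree = n := by
    rw [hPdef, degree_sub_eq_left_of_degree_lt, degree_X_pow]
    rw [degree_X_pow, degree_X]
    exact_mod_cast (by omega : 1 < n)
  have hP0 : P ≠ 0 := fun h => by
    rw [h, degree_zero] at hdeg; exact (by simp : (⊥ : WithBot ℕ) ≠ (n : WithBot ℕ)) hdeg
  have hroot : ∀ x : F, x ^ n = x → x ∈ P.roots.toFinset := by
    intro x hx
    simp only [Multiset.mem_toFinset, mem_roots hP0, IsRoot, hPdef]
    simp [sub_eq_zero, hx]; exact fun h' => hP0 (by rw [hPdef, h', sub_self])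
  have h0 : (0 : F) ∈ P.roots.toFinset := hroot 0 (by rw [zero_pow (by omega : n ≠ 0)])
  have hcard : P.roots.toFinset.card ≤ n := by
    calc P.roots.toFinset.card ≤ Multiset.card P.roots := Multiset.toFinset_card_le _
      _ ≤ P.natDegree := card_roots' P
      _ = n := natDegree_eq_of_degree_eq_some hdeg
  have hinj : Function.Injective (fun u : {u : Fˣ // (u : F) ^ n = (u : F)} =>
      ((u.1 : F) : F)) := by
    intro u v huv
    exact Subtype.ext (Units.ext huv)
  rw [Nat.card_eq_fintype_card]
  calc Fintype.card {u : Fˣ // (u : F) ^ n = (u : F)}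
      ≤ (P.roots.toFinset.erase 0).card := by
        rw [← Fintype.card_coe]
        apply Fintype.card_le_of_injective
          (f := fun u => ⟨(u.1 : F), Finset.mem_erase.2 ⟨Units.ne_zero _, hroot _ u.2⟩⟩)
        intro u v huv
        exact Subtype.ext (Units.ext (congrArg Subtype.val huv))
    _ = P.roots.toFinset.card - 1 := Finset.card_erase_of_mem h0
    _ ≤ n - 1 := Nat.sub_le_sub_right hcard 1

theorem stmt1 {F : Type*} [Field F] [Fintype F] (p k : ℕ) [Fact p.Prime] (hk : 1 ≤ k)
    (hq : Fintype.card F = p ^ k)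
    (s : ℕ) (hs : 1 ≤ s) (e : Fin s → ℕ) (he : Function.Injective e) :
    (numDynClasses {f : F → F | ∃ a : Fin s → Fˣ, f = fun x => ∑ i, (a i : F) * x ^ (e i)} : ℝ) ≤
      ((p : ℝ) ^ k - 1) ^ s / k + 2 * ((p : ℝ) ^ ((k : ℝ) / 2) - 1) ^ s / k
        + ((p : ℝ) ^ ((k : ℝ) / 3) - 1) ^ s := by
  classical
  have hp2 : 2 ≤ p := (Fact.out : p.Prime).two_le
  -- characteristic
  obtain ⟨n, hpr, hc⟩ := FiniteField.card F (ringChar F)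
  have hrp : ringChar F = p := by
    have h1 : ringChar F ∣ p ^ k := by
      rw [← hq, hc]; exact dvd_pow_self _ (by exact_mod_cast n.pos.ne')
    exact (Nat.prime_dvd_prime_iff_eq hpr (Fact.out : p.Prime)).mp (hpr.dvd_of_dvd_pow h1)
  haveI hch : CharP F p := hrp ▸ ringChar.charP F
  -- frobenius
  let π : Equiv.Perm (Fin s → Fˣ) := auxPermHom F s (frobeniusEquiv F p)
  have happ : ∀ (m : ℕ) (a : Fin s → Fˣ) (i : Fin s),
      (((π ^ m) a i : Fˣ) : F) = ((a i : F)) ^ p ^ m := by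
    intro m a i
    have h1 : π ^ m = auxPermHom F s (frobeniusEquiv F p ^ m) :=
      (map_pow (auxPermHom F s) (frobeniusEquiv F p) m).symm
    rw [h1, auxPermHom_apply, ← iterateFrobeniusEquiv_eq_pow, iterateFrobeniusEquiv_def]
  have hall : ∀ x : F, x ^ p ^ k = x := fun x => by rw [← hq]; exact FiniteField.pow_card x
  have hπk : π ^ k = 1 := by
    refine Equiv.ext fun a => funext fun i => Units.ext ?_
    show (((π ^ k) a i : Fˣ) : F) = ((a i : F))
    rw [happ]; exact hall _
  have horder : orderOf π = k := by
    have hdvd : orderOf π ∣ k := orderOf_dvd_of_pow_eq_one hπk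
    have hne : orderOf π ≠ 0 := by
      intro h; rw [h] at hdvd; exact absurd (Nat.eq_zero_of_zero_dvd hdvd) (by omega)
    have hfix : ∀ x : F, x ^ p ^ orderOf π = x := by
      intro x
      rcases eq_or_ne x 0 with rfl | hx
      · exact zero_pow (pow_ne_zero _ (by omega))
      · have h2 : (π ^ orderOf π) (fun _ => Units.mk0 x hx) = fun _ => Units.mk0 x hx := by
          rw [pow_orderOf_eq_one]; rfl
        have h4 := congrArg Units.val (congrFun h2 ⟨0, hs⟩)
        rw [happ] at h4
        simpa using h4
    have hcard2 : p ^ k ≤ p ^ orderOf π := by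
      rw [← hq]
      refine aux_card_le_of_forall_pow _ ?_ hfix
      calc 2 ≤ p := hp2
        _ = p ^ 1 := (pow_one p).symm
        _ ≤ p ^ orderOf π := Nat.pow_le_pow_right (by omega) (by omega)
    have hkle : k ≤ orderOf π := (Nat.pow_le_pow_iff_right (by omega : 1 < p)).mp hcard2
    exact le_antisymm (Nat.le_of_dvd (by omega) hdvd) hkle
  -- group action setup
  let G := Subgroup.zpowers π
  letI : Fintype G := Fintype.ofFinite G
  letI : ∀ g : G, Fintype (MulAction.fixedBy (Fin s → Fˣ) g) := fun g => Fintype.ofFinite _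
  letI : Fintype (Quotient (MulAction.orbitRel G (Fin s → Fˣ))) := Fintype.ofFinite _
  have hburn := MulAction.sum_card_fixedBy_eq_card_orbits_mul_card_group G (Fin s → Fˣ)
  have hcardG : Fintype.card G = k := by
    rw [← Nat.card_eq_fintype_card, Nat.card_zpowers, horder]
  have hfinord : IsOfFinOrder π := isOfFinOrder_iff_pow_eq_one.2 ⟨k, by omega, hπk⟩
  let e2 : Fin k ≃ G := (finCongr horder.symm).trans (finEquivZPowers hfinord)
  have he2 : ∀ j : Fin k, ((e2 j : G) : Equiv.Perm (Fin s → Fˣ)) = π ^ (j : ℕ) := fun j => rfl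
  set cF : Fin k → ℕ := fun j => Fintype.card {a : Fin s → Fˣ // (π ^ (j : ℕ)) a = a} with hcF
  have hfixcard : ∀ j : Fin k, Fintype.card (MulAction.fixedBy (Fin s → Fˣ) (e2 j)) = cF j := by
    intro j
    refine Fintype.card_congr (Equiv.subtypeEquivRight fun a => ?_)
    rw [MulAction.mem_fixedBy]
    exact Iff.rfl
  have hburn2 : Fintype.card (Quotient (MulAction.orbitRel G (Fin s → Fˣ))) * k
      = ∑ j : Fin k, cF j := by
    rw [hcardG] at hburn
    rw [← hburn,
      ← Equiv.sum_comp e2 (fun g => Fintype.card (MulAction.fixedBy (Fin s → Fˣ) g))]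
    exact Finset.sum_congr rfl fun j _ => hfixcard j
  -- surjection from orbit quotient to dyn classes
  set S : Set (F → F) := {f : F → F | ∃ a : Fin s → Fˣ, f = fun x => ∑ i, (a i : F) * x ^ (e i)}
    with hS
  have hmem : ∀ a : Fin s → Fˣ, (fun x => ∑ i, (a i : F) * x ^ (e i)) ∈ S := fun a => ⟨a, rfl⟩
  have hresp : ∀ a b : Fin s → Fˣ, (MulAction.orbitRel G (Fin s → Fˣ)).r a b →
      (Quot.mk (fun f g : S => DynEquiv f.1 g.1) ⟨_, hmem a⟩ =
        Quot.mk (fun f g : S => DynEquiv f.1 g.1) ⟨_, hmem b⟩) := by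
    intro a b hab
    obtain ⟨g, hg⟩ := hab
    obtain ⟨m, hm⟩ := Subgroup.mem_zpowers_iff.mp g.2
    apply Quot.sound
    show DynEquiv (fun x => ∑ i, (a i : F) * x ^ (e i)) (fun x => ∑ i, (b i : F) * x ^ (e i))
    apply aux_dynEquiv_symm
    have hba : a = auxPermHom F s (frobeniusEquiv F p ^ m) b := by
      rw [map_zpow]
      show a = (π ^ m) b
      rw [hm, ← hg]
      rfl
    rw [hba]
    exact aux_dynEquiv_ringAut e (frobeniusEquiv F p ^ m) b
  let Φ : Quotient (MulAction.orbitRel G (Fin s → Fˣ)) → Quot (fun f g : S => DynEquiv f.1 g.1) :=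
    Quotient.lift (fun a => Quot.mk _ ⟨_, hmem a⟩) hresp
  have hsurj : Function.Surjective Φ := by
    rintro ⟨⟨f, hf⟩⟩
    obtain ⟨a, ha⟩ := hf
    refine ⟨Quotient.mk _ a, ?_⟩
    show Quot.mk _ (⟨_, hmem a⟩ : S) = _
    congr 1
    exact Subtype.ext ha.symm
  have hle1 : numDynClasses S ≤ Fintype.card (Quotient (MulAction.orbitRel G (Fin s → Fˣ))) := by
    rw [numDynClasses, ← Nat.card_eq_fintype_card]
    exact Nat.card_le_card_of_surjective Φ hsurj
  -- counting bounds
  have hcX : Fintype.card (Fin s → Fˣ) = (p ^ k - 1) ^ s := by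
    rw [Fintype.card_fun, Fintype.card_fin, Fintype.card_units, hq]
  have hcF0 : ∀ j : Fin k, cF j ≤ (p ^ k - 1) ^ s := fun j =>
    (Fintype.card_subtype_le _).trans_eq hcX
  have hgcd_bound : ∀ j : Fin k, (j : ℕ) ≠ 0 →
      cF j ≤ (p ^ Nat.gcd (j : ℕ) k - 1) ^ s := by
    intro j hj
    have hd1 : 1 ≤ Nat.gcd (j : ℕ) k := Nat.gcd_pos_of_pos_right _ (by omega)
    have hmap : ∀ a : {a : Fin s → Fˣ // (π ^ (j : ℕ)) a = a}, ∀ i : Fin s,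
        ((a.1 i : F)) ^ p ^ Nat.gcd (j : ℕ) k = (a.1 i : F) := by
      intro a i
      have h1 : ((a.1 i : F)) ^ p ^ (j : ℕ) = (a.1 i : F) := by
        have h2 := congrArg Units.val (congrFun a.2 i)
        rwa [happ] at h2
      exact aux_gcd_fix p (j : ℕ) k (by omega) hk _ h1 (hall _)
    have hinj : cF j ≤
        Fintype.card (Fin s → {u : Fˣ // (u : F) ^ p ^ Nat.gcd (j : ℕ) k = (u : F)}) := by
      apply Fintype.card_le_of_injective (fun a => fun i => ⟨a.1 i, hmap a i⟩)
      intro a b hab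
      apply Subtype.ext; funext i
      exact congrArg Subtype.val (congrFun hab i)
    have hcount : Fintype.card {u : Fˣ // (u : F) ^ p ^ Nat.gcd (j : ℕ) k = (u : F)}
        ≤ p ^ Nat.gcd (j : ℕ) k - 1 := by
      rw [← Nat.card_eq_fintype_card]
      exact aux_units_fix_card_le _ (le_trans hp2 (Nat.le_self_pow (by omega) p))
    calc cF j ≤ _ := hinj
      _ = Fintype.card {u : Fˣ // (u : F) ^ p ^ Nat.gcd (j : ℕ) k = (u : F)} ^ s := by
        rw [Fintype.card_fun, Fintype.card_fin]
      _ ≤ (p ^ Nat.gcd (j : ℕ) k - 1) ^ s := Nat.pow_le_pow_left hcount s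
  -- real estimates
  have hp1R : (1 : ℝ) ≤ (p : ℝ) := by exact_mod_cast (by omega : 1 ≤ p)
  have h2R : ∀ x : ℝ, 0 ≤ x → 1 ≤ (p : ℝ) ^ x := by
    intro x hx
    calc (1 : ℝ) = (p : ℝ) ^ (0 : ℝ) := (Real.rpow_zero _).symm
      _ ≤ _ := Real.rpow_le_rpow_of_exponent_le hp1R hx
  have hcast : ∀ d : ℕ, ((p ^ d - 1 : ℕ) : ℝ) = (p : ℝ) ^ (d : ℕ) - 1 := by
    intro d
    have h1 : 1 ≤ p ^ d := Nat.one_le_pow _ _ (by omega)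
    rw [Nat.cast_sub h1, Nat.cast_pow, Nat.cast_one]
  set c1 : ℝ := ((p : ℝ) ^ k - 1) ^ s with hc1def
  set c2 : ℝ := ((p : ℝ) ^ ((k : ℝ) / 2) - 1) ^ s with hc2def
  set c3 : ℝ := ((p : ℝ) ^ ((k : ℝ) / 3) - 1) ^ s with hc3def
  have hc2nn : 0 ≤ c2 := pow_nonneg (by linarith [h2R ((k : ℝ) / 2) (by positivity)]) s
  have hc3nn : 0 ≤ c3 := pow_nonneg (by linarith [h2R ((k : ℝ) / 3) (by positivity)]) s
  have h1k : (1 : ℝ) ≤ (p : ℝ) ^ k := by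
    exact_mod_cast Nat.one_le_pow k p (by omega)
  have hc1nn : 0 ≤ c1 := pow_nonneg (by linarith) s
  set w : Fin k → ℝ := fun j =>
    if (j : ℕ) = 0 then c1 else if 2 * Nat.gcd (j : ℕ) k = k then c2 else c3 with hwdef
  have hw0 : ∀ j : Fin k, (j : ℕ) = 0 → w j = c1 := by
    intro j h; rw [hwdef]; simp [h]
  have hw2 : ∀ j : Fin k, (j : ℕ) ≠ 0 → 2 * Nat.gcd (j : ℕ) k = k → w j = c2 := by
    intro j h h2; rw [hwdef]; simp [h, h2]
  have hw3 : ∀ j : Fin k, (j : ℕ) ≠ 0 → ¬(2 * Nat.gcd (j : ℕ) k = k) → w j = c3 := by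
    intro j h h2; rw [hwdef]; simp [h, h2]
  have hwb : ∀ j : Fin k, (cF j : ℝ) ≤ w j := by
    intro j
    by_cases hj0 : (j : ℕ) = 0
    · rw [hw0 j hj0]
      calc (cF j : ℝ) ≤ (((p ^ k - 1) ^ s : ℕ) : ℝ) := by exact_mod_cast hcF0 j
        _ = c1 := by rw [Nat.cast_pow, hcast k]
    · have hb := hgcd_bound j hj0
      have hd1 : 1 ≤ Nat.gcd (j : ℕ) k := Nat.gcd_pos_of_pos_right _ (by omega)
      have hdj : Nat.gcd (j : ℕ) k ≤ (j : ℕ) := Nat.gcd_le_left _ (by omega)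
      have hdlt : Nat.gcd (j : ℕ) k < k := lt_of_le_of_lt hdj j.isLt
      have hcastd : ((p ^ Nat.gcd (j : ℕ) k - 1 : ℕ) : ℝ)
          = (p : ℝ) ^ ((Nat.gcd (j : ℕ) k : ℕ) : ℝ) - 1 := by
        rw [hcast, Real.rpow_natCast]
      by_cases h2d : 2 * Nat.gcd (j : ℕ) k = k
      · rw [hw2 j hj0 h2d]
        have hdr : ((Nat.gcd (j : ℕ) k : ℕ) : ℝ) = (k : ℝ) / 2 := by
          have h3 : ((2 * Nat.gcd (j : ℕ) k : ℕ) : ℝ) = (k : ℝ) := by rw [h2d]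
          push_cast at h3; linarith
        calc (cF j : ℝ) ≤ (((p ^ Nat.gcd (j : ℕ) k - 1) ^ s : ℕ) : ℝ) := by exact_mod_cast hb
          _ = c2 := by rw [Nat.cast_pow, hcastd, hdr]
      · rw [hw3 j hj0 h2d]
        have h3d : 3 * Nat.gcd (j : ℕ) k ≤ k := by
          obtain ⟨t, ht⟩ := Nat.gcd_dvd_right (j : ℕ) k
          have ht3 : 3 ≤ t := by
            rcases Nat.lt_or_ge t 3 with h | h
            · interval_cases t <;> omega
            · exact h
          calc 3 * Nat.gcd (j : ℕ) k ≤ t * Nat.gcd (j : ℕ) k :=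
              Nat.mul_le_mul_right _ ht3
            _ = k := by rw [mul_comm]; exact ht.symm
        have hdr : ((Nat.gcd (j : ℕ) k : ℕ) : ℝ) ≤ (k : ℝ) / 3 := by
          have h3 : ((3 * Nat.gcd (j : ℕ) k : ℕ) : ℝ) ≤ (k : ℝ) := by exact_mod_cast h3d
          push_cast at h3; linarith
        have hmono : (p : ℝ) ^ ((Nat.gcd (j : ℕ) k : ℕ) : ℝ) ≤ (p : ℝ) ^ ((k : ℝ) / 3) :=
          Real.rpow_le_rpow_of_exponent_le hp1R hdr
        calc (cF j : ℝ) ≤ (((p ^ Nat.gcd (j : ℕ) k - 1) ^ s : ℕ) : ℝ) := by exact_mod_cast hb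
          _ = ((p : ℝ) ^ ((Nat.gcd (j : ℕ) k : ℕ) : ℝ) - 1) ^ s := by rw [Nat.cast_pow, hcastd]
          _ ≤ c3 := by
            apply pow_le_pow_left₀
            · linarith [h2R ((Nat.gcd (j : ℕ) k : ℕ) : ℝ) (by positivity)]
            · linarith
  -- sum bound
  have hval2 : ∀ j : Fin k, (j : ℕ) ≠ 0 → 2 * Nat.gcd (j : ℕ) k = k → 2 * (j : ℕ) = k := by
    intro j hj0 h2d
    obtain ⟨u, hu⟩ := Nat.gcd_dvd_left (j : ℕ) k
    rcases Nat.lt_or_ge u 2 with h | h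
    · interval_cases u <;> omega
    · have h5 := Nat.mul_le_mul_left (Nat.gcd (j : ℕ) k) h
      have h6 := j.isLt
      omega
  have hsumw : ∑ j : Fin k, w j ≤ c1 + 2 * c2 + k * c3 := by
    rw [← Finset.sum_filter_add_sum_filter_not Finset.univ (fun j : Fin k => (j : ℕ) = 0) w]
    rw [← Finset.sum_filter_add_sum_filter_not
      (Finset.univ.filter (fun j : Fin k => ¬((j : ℕ) = 0)))
      (fun j : Fin k => 2 * Nat.gcd (j : ℕ) k = k) w]
    have hA : ∑ j ∈ Finset.univ.filter (fun j : Fin k => (j : ℕ) = 0), w j ≤ 1 * c1 := by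
      refine le_trans (Finset.sum_le_card_nsmul _ _ c1 ?_) ?_
      · intro j hj
        rw [Finset.mem_filter] at hj
        exact le_of_eq (hw0 j hj.2)
      · rw [nsmul_eq_mul]
        refine mul_le_mul_of_nonneg_right ?_ hc1nn
        have hcA : (Finset.univ.filter (fun j : Fin k => (j : ℕ) = 0)).card ≤ 1 := by
          refine Finset.card_le_one.2 fun a ha b hb => ?_
          rw [Finset.mem_filter] at ha hb
          exact Fin.val_injective (by omega)
        exact_mod_cast hcA
    have hB2 : ∑ j ∈ (Finset.univ.filter (fun j : Fin k => ¬((j : ℕ) = 0))).filter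
        (fun j : Fin k => 2 * Nat.gcd (j : ℕ) k = k), w j ≤ 1 * c2 := by
      refine le_trans (Finset.sum_le_card_nsmul _ _ c2 ?_) ?_
      · intro j hj
        simp only [Finset.mem_filter, Finset.mem_univ, true_and] at hj
        exact le_of_eq (hw2 j hj.1 hj.2)
      · rw [nsmul_eq_mul]
        refine mul_le_mul_of_nonneg_right ?_ hc2nn
        have hcB : ((Finset.univ.filter (fun j : Fin k => ¬((j : ℕ) = 0))).filter
            (fun j : Fin k => 2 * Nat.gcd (j : ℕ) k = k)).card ≤ 1 := by
          refine Finset.card_le_one.2 fun a ha b hb => ?_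
          simp only [Finset.mem_filter, Finset.mem_univ, true_and] at ha hb
          have h1 := hval2 a ha.1 ha.2
          have h2 := hval2 b hb.1 hb.2
          exact Fin.val_injective (by omega)
        exact_mod_cast hcB
    have hB3 : ∑ j ∈ (Finset.univ.filter (fun j : Fin k => ¬((j : ℕ) = 0))).filter
        (fun j : Fin k => ¬(2 * Nat.gcd (j : ℕ) k = k)), w j ≤ (k : ℝ) * c3 := by
      refine le_trans (Finset.sum_le_card_nsmul _ _ c3 ?_) ?_
      · intro j hj
        simp only [Finset.mem_filter, Finset.mem_univ, true_and] at hj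
        exact le_of_eq (hw3 j hj.1 hj.2)
      · rw [nsmul_eq_mul]
        refine mul_le_mul_of_nonneg_right ?_ hc3nn
        have hcB : ((Finset.univ.filter (fun j : Fin k => ¬((j : ℕ) = 0))).filter
            (fun j : Fin k => ¬(2 * Nat.gcd (j : ℕ) k = k))).card ≤ k := by
          refine le_trans (Finset.card_filter_le _ _) ?_
          refine le_trans (Finset.card_filter_le _ _) ?_
          simp
        exact_mod_cast hcB
    linarith
  have hsum : (Fintype.card (Quotient (MulAction.orbitRel G (Fin s → Fˣ))) : ℝ) * k
      ≤ c1 + 2 * c2 + k * c3 := by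
    have h1 : ((Fintype.card (Quotient (MulAction.orbitRel G (Fin s → Fˣ))) * k : ℕ) : ℝ)
        = ∑ j : Fin k, (cF j : ℝ) := by
      rw [hburn2]; push_cast; rfl
    calc (Fintype.card (Quotient (MulAction.orbitRel G (Fin s → Fˣ))) : ℝ) * k
        = ((Fintype.card (Quotient (MulAction.orbitRel G (Fin s → Fˣ))) * k : ℕ) : ℝ) := by
          push_cast; ring
      _ = ∑ j : Fin k, (cF j : ℝ) := h1
      _ ≤ ∑ j : Fin k, w j := Finset.sum_le_sum fun j _ => hwb j
      _ ≤ c1 + 2 * c2 + k * c3 := hsumw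
  have hkpos : (0 : ℝ) < k := by exact_mod_cast (by omega : 0 < k)
  calc (numDynClasses S : ℝ)
      ≤ (Fintype.card (Quotient (MulAction.orbitRel G (Fin s → Fˣ))) : ℝ) := by
        exact_mod_cast hle1
    _ ≤ (c1 + 2 * c2 + k * c3) / k := by rw [le_div_iff₀ hkpos]; exact hsum
    _ = c1 / k + 2 * c2 / k + c3 := by field_simp
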